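/- For all m ≥ 0, 21·∑_{s=0}^{m} JN_s = 21·JN_{m+1} − (7·(1 + i + 4j + 7k) − 4·VN_{m+1} + VN_m), where VN_m = Vₘ + Vₘ₊₁·i + Vₘ₊₂·j + Vₘ₊₃·k and Vₙ is the 3-periodic sequence taking values 2, −3, 1 for n ≡ 0, 1, 2 (mod 3). -/
import Mathlib


def J3 : ℕ → ℤ
  | 0 => 0
  | 1 => 1
  | 2 => 1
  | n + 3 => J3 (n + 2) + J3 (n + 1) + 2 * J3 n

def j3 : ℕ → ℤ
  | 0 => 2
  | 1 => 1
  | 2 => 5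
  | n + 3 => j3 (n + 2) + j3 (n + 1) + 2 * j3 n

def V3 (n : ℕ) : ℤ := if n % 3 = 0 then 2 else if n % 3 = 1 then -3 else 1
noncomputable section

abbrev DualQ := TrivSqZeroExt ℝ (Fin 3 → ℝ)

def qi : DualQ := TrivSqZeroExt.inr (Pi.single 0 1)
def qj : DualQ := TrivSqZeroExt.inr (Pi.single 1 1)
def qk : DualQ := TrivSqZeroExt.inr (Pi.single 2 1)

def JN (m : ℕ) : DualQ :=
  (J3 m : DualQ) + (J3 (m + 1) : DualQ) * qi + (J3 (m + 2) : DualQ) * qj + (J3 (m + 3) : DualQ) * qk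

def jN (m : ℕ) : DualQ :=
  (j3 m : DualQ) + (j3 (m + 1) : DualQ) * qi + (j3 (m + 2) : DualQ) * qj + (j3 (m + 3) : DualQ) * qk

def conjJN (m : ℕ) : DualQ :=
  (J3 m : DualQ) - (J3 (m + 1) : DualQ) * qi - (J3 (m + 2) : DualQ) * qj - (J3 (m + 3) : DualQ) * qk

def conjjN (m : ℕ) : DualQ :=
  (j3 m : DualQ) - (j3 (m + 1) : DualQ) * qi - (j3 (m + 2) : DualQ) * qj - (j3 (m + 3) : DualQ) * qk

def VN (m : ℕ) : DualQ :=
  (V3 m : DualQ) + (V3 (m + 1) : DualQ) * qi + (V3 (m + 2) : DualQ) * qj + (V3 (m + 3) : DualQ) * qk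

lemma V3_per (n : ℕ) : V3 (n + 3) = V3 n := by
  simp [V3, Nat.add_mod]

lemma auxJ : ∀ n : ℕ, 21 * J3 (n + 2) = 42 * J3 (n + 1) - 4 * V3 (n + 2) + 5 * V3 (n + 1) - V3 n := by
  intro n
  induction n using Nat.twoStepInduction with
  | zero => norm_num [J3, V3]
  | one => norm_num [J3, V3]
  | more n ih1 ih2 =>
    have r4 : J3 (n + 4) = J3 (n + 3) + J3 (n + 2) + 2 * J3 (n + 1) := rfl
    have p1 : V3 (n + 4) = V3 (n + 1) := V3_per (n + 1)
    have p0 : V3 (n + 3) = V3 n := V3_per n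
    simp only [show n+1+2=n+3 by omega, show n+1+1=n+2 by omega] at ih2
    rw [show n + 2 + 2 = n + 4 by omega, show n + 2 + 1 = n + 3 by omega, r4, p1, p0]
    rw [p0] at ih2
    omega

lemma auxC (n : ℕ) : ((21 * J3 (n + 2) : ℤ) : DualQ) =
    ((42 * J3 (n + 1) - 4 * V3 (n + 2) + 5 * V3 (n + 1) - V3 n : ℤ) : DualQ) := by
  exact_mod_cast congrArg (Int.cast : ℤ → DualQ) (auxJ n)

theorem stmt_17 : ∀ m : ℕ,
    21 * ∑ s ∈ Finset.range (m + 1), JN s =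
      21 * JN (m + 1) - (7 * (1 + qi + 4 * qj + 7 * qk) - 4 * VN (m + 1) + VN m) := by
  intro m
  induction m with
  | zero =>
    simp only [Finset.sum_range_one, JN, VN, show (0:ℕ)+1 = 1 from rfl]
    norm_num [J3, V3]
    ring
  | succ n ih =>
    rw [Finset.sum_range_succ, mul_add, ih]
    simp only [JN, VN]
    have h0 := auxC n
    have h1 := auxC (n + 1)
    have h2 := auxC (n + 2)
    have h3 := auxC (n + 3)
    push_cast at h0 h1 h2 h3 ⊢
    simp only [show n+1+1=n+2 by omega, show n+1+2=n+3 by omega, show n+1+3=n+4 by omega,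
      show n+2+1=n+3 by omega, show n+2+2=n+4 by omega, show n+3+1=n+4 by omega,
      show n+3+2=n+5 by omega, show n+2+3=n+5 by omega, show n+1+1+3=n+5 by omega] at h1 h2 h3 ⊢
    linear_combination -(h0 + h1 * qi + h2 * qj + h3 * qk)
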